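/- arXiv:1710.06939 — 3 statements merged into one kernel-verified Lean document; each statement's English description precedes it below -/
import Mathlib

section
/- A partial Mal'tsev operation arising from a connector is unique: if p and q are two functions R ×_X S → X (where R, S are equivalence relations on a set X with a compatible Mal'tsev term t on X in the sense that p and q are restrictions of relations compatible with t) satisfying p(x,y,y) = x, p(y,y,z) = z, q(x,y,y) = x, q(y,y,z) = z, and both p and q preserve the relations R and S (i.e., x S p(x,y,z) and z R p(x,y,z), and similarly for q), and X carries a Mal'tsev operation t compatible with R, S, p, q, then p = q on R ×_X S. (Specialized to groups: if R, S are congruences on a group X, then any connector p(x,y,z) on triples with x R y and y S z satisfying the unit laws and compatibility with the group operation is given by p(x,y,z) = x * y⁻¹ * z.) -/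
/-- Uniqueness of the connector, specialized to groups: if `R`, `S` are
congruences on a group `X`, then any connector `p` defined on triples with
`x R y` and `y S z`, satisfying the unit laws and compatibility with the
group multiplication, is given by `p x y z = x * y⁻¹ * z`. -/
theorem connector_unique_groups
    {X : Type*} [Group X]
    (R S : X → X → Prop)
    (hR : Equivalence R) (hS : Equivalence S)
    (hRmul : ∀ a b c d : X, R a b → R c d → R (a * c) (b * d))
    (hSmul : ∀ a b c d : X, S a b → S c d → S (a * c) (b * d))
    (p : ∀ x y z : X, R x y → S y z → X)
    (hp1 : ∀ (x y : X) (hxy : R x y) (hyy : S y y), p x y y hxy hyy = x)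
    (hp2 : ∀ (y z : X) (hyy : R y y) (hyz : S y z), p y y z hyy hyz = z)
    (hpmul : ∀ (x y z x' y' z' : X)
      (hxy : R x y) (hyz : S y z) (hxy' : R x' y') (hyz' : S y' z')
      (hxy2 : R (x * x') (y * y')) (hyz2 : S (y * y') (z * z')),
      p (x * x') (y * y') (z * z') hxy2 hyz2 =
        p x y z hxy hyz * p x' y' z' hxy' hyz')
    : ∀ (x y z : X) (hxy : R x y) (hyz : S y z),
      p x y z hxy hyz = x * y⁻¹ * z := by
  intro x y z hxy hyz
  have h1 : R (x * y⁻¹) 1 := by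
    have := hRmul x y y⁻¹ y⁻¹ hxy (hR.refl _)
    simpa using this
  have hxy2 : R ((x * y⁻¹) * y) (1 * y) := hRmul _ _ _ _ h1 (hR.refl y)
  have hyz2 : S (1 * y) (1 * z) := hSmul 1 1 y z (hS.refl 1) hyz
  have key := hpmul (x * y⁻¹) 1 1 y y z h1 (hS.refl 1) (hR.refl y) hyz hxy2 hyz2
  rw [hp1, hp2] at key
  simp only [inv_mul_cancel_right, one_mul] at key
  exact key
end

section
/- Let (L, ξ, ∂) be a precrossed B-module of Lie algebras and K an ideal of L stable under the B-action. Inside the semidirect product B ⋉ L, the Lie-algebra commutator [{0} × K, ker(1,∂)] of the ideal {(0,k) : k ∈ K} with the ideal {(-∂(l), l) : l ∈ L} is contained in {0} × L, and its image under the projection to L equals the span of elements ∂(l)·k + [k,l] for k ∈ K, l ∈ L. -/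
/-- Inside the semidirect product `B ⋉ L` of a precrossed `B`-module
`(L,ξ,∂)`, the Lie commutator `[{0} × K, ker (1,∂)]` (the Lie ideal generated
by brackets of elements of the ideals `{0} × K` and `{(-∂ l, l)}`) is
contained in `{0} × L`, and its image under the projection to `L` is the
span of the elements `∂(l)·k + ⁅k, l⁆` for `k ∈ K`, `l ∈ L`. -/
theorem semidirect_commutator_ideal
    {k B L : Type*} [Field k]
    [LieRing B] [LieAlgebra k B] [LieRing L] [LieAlgebra k L]
    (act : B →ₗ[k] L →ₗ[k] L)
    (hder : ∀ (b : B) (l l' : L),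
      act b ⁅l, l'⁆ = ⁅act b l, l'⁆ + ⁅l, act b l'⁆)
    (hactLie : ∀ (b b' : B) (l : L),
      act ⁅b, b'⁆ l = act b (act b' l) - act b' (act b l))
    (d : L →ₗ⁅k⁆ B)
    (hpre : ∀ (b : B) (l : L), d (act b l) = ⁅b, d l⁆)
    (K : LieIdeal k L)
    (hKact : ∀ (b : B), ∀ x ∈ K, act b x ∈ K)
    -- the semidirect product bracket on `B × L`
    (sbr : B × L → B × L → B × L)
    (hsbr : ∀ p q : B × L,
      sbr p q = (⁅p.1, q.1⁆, act p.1 q.2 - act q.1 p.2 + ⁅p.2, q.2⁆))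
    -- the two ideals `{0} × K` and `ker (1,∂)`
    (A C : Set (B × L))
    (hA : A = {p : B × L | p.1 = 0 ∧ p.2 ∈ K})
    (hC : C = {p : B × L | ∃ l : L, p = (-(d l), l)})
    -- the Lie commutator `[A, C]`: the smallest submodule containing all
    -- brackets of elements of `A` and `C` and stable under bracketing
    (comm : Submodule k (B × L))
    (hcomm : comm = sInf {P : Submodule k (B × L) |
      (∀ x ∈ P, ∀ y : B × L, sbr y x ∈ P) ∧
      (∀ a ∈ A, ∀ c ∈ C, sbr a c ∈ P)}) :
    (∀ p ∈ comm, p.1 = 0) ∧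
    Submodule.map (LinearMap.snd k B L) comm =
      Submodule.span k
        {x : L | ∃ kk ∈ K, ∃ l : L, x = act (d l) kk + ⁅kk, l⁆} := by
  subst hA hC hcomm
  set gset : Set L := {x : L | ∃ kk ∈ K, ∃ l : L, x = act (d l) kk + ⁅kk, l⁆} with hgset
  set S : Submodule k L := Submodule.span k gset with hSdef
  have hgen : ∀ kk ∈ K, ∀ l : L, act (d l) kk + ⁅kk, l⁆ ∈ S := fun kk hk l =>
    Submodule.subset_span ⟨kk, hk, l, rfl⟩
  -- S is stable under act b
  have hact : ∀ (b : B) (s : L), s ∈ S → act b s ∈ S := by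
    intro b s hs
    induction hs using Submodule.span_induction with
    | mem x hx =>
      obtain ⟨kk, hk, l, rfl⟩ := hx
      have h1 : act (d (act b l)) kk = act b (act (d l) kk) - act (d l) (act b kk) := by
        rw [hpre b l]; exact hactLie b (d l) kk
      have key : act b (act (d l) kk + ⁅kk, l⁆)
          = (act (d (act b l)) kk + ⁅kk, act b l⁆)
            + (act (d l) (act b kk) + ⁅act b kk, l⁆) := by
        rw [map_add, hder b kk l, h1]; abel
      rw [key]
      exact add_mem (hgen kk hk (act b l)) (hgen (act b kk) (hKact b kk hk) l)
    | zero => simp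
    | add x y _ _ hx hy => rw [map_add]; exact add_mem hx hy
    | smul c x _ hx => rw [map_smul]; exact Submodule.smul_mem _ _ hx
  -- S is stable under ⁅m, ·⁆
  have hlie : ∀ (m s : L), s ∈ S → ⁅m, s⁆ ∈ S := by
    intro m s hs
    induction hs using Submodule.span_induction with
    | mem x hx =>
      obtain ⟨kk, hk, l, rfl⟩ := hx
      have hdm' : d (act (d l) m + ⁅m, l⁆) = 0 := by
        rw [map_add, hpre, LieHom.map_lie, ← lie_skew (d m) (d l)]; abel
      have key : ⁅m, act (d l) kk + ⁅kk, l⁆⁆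
          = (act (d (act (d l) m + ⁅m, l⁆)) kk + ⁅kk, act (d l) m + ⁅m, l⁆⁆)
            - (act (d l) ⁅kk, m⁆ + ⁅⁅kk, m⁆, l⁆) := by
        rw [hdm', map_zero, LinearMap.zero_apply, lie_add, leibniz_lie m kk l,
          hder (d l) kk m, lie_add]
        have h2 : ⁅m, act (d l) kk⁆ = -⁅act (d l) kk, m⁆ := (lie_skew _ _).symm
        have h3 : ⁅⁅m, kk⁆, l⁆ = -⁅⁅kk, m⁆, l⁆ := by rw [← neg_lie, lie_skew]
        rw [h2, h3]; abel
      rw [key]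
      have h4 : ⁅m, kk⁆ ∈ K := K.lie_mem hk
      have hkm : ⁅kk, m⁆ ∈ K := by rw [← lie_skew]; exact neg_mem h4
      exact sub_mem (hgen kk hk _) (hgen _ hkm l)
    | zero => simp
    | add x y _ _ hx hy => rw [lie_add]; exact add_mem hx hy
    | smul c x _ hx => rw [lie_smul]; exact Submodule.smul_mem _ _ hx
  set P₀ : Submodule k (B × L) := (⊥ : Submodule k B).prod S with hP₀
  have hmemP₀ : ∀ p : B × L, p ∈ P₀ ↔ p.1 = 0 ∧ p.2 ∈ S := by
    intro p; rw [Submodule.mem_prod, Submodule.mem_bot]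
  have hP₀mem : P₀ ∈ {P : Submodule k (B × L) |
      (∀ x ∈ P, ∀ y : B × L, sbr y x ∈ P) ∧
      (∀ a ∈ {p : B × L | p.1 = 0 ∧ p.2 ∈ K},
        ∀ c ∈ {p : B × L | ∃ l : L, p = (-(d l), l)}, sbr a c ∈ P)} := by
    constructor
    · rintro x hx y
      rw [hmemP₀] at hx ⊢
      obtain ⟨hx1, hx2⟩ := hx
      rw [hsbr, hx1]
      refine ⟨by simp, ?_⟩
      simp only [map_zero, LinearMap.zero_apply, sub_zero]
      exact add_mem (hact y.1 x.2 hx2) (hlie y.2 x.2 hx2)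
    · rintro a ⟨ha1, ha2⟩ c ⟨l, rfl⟩
      rw [hsbr, ha1, hmemP₀]
      constructor
      · simp
      · simp only [map_zero, LinearMap.zero_apply, map_neg, LinearMap.neg_apply, zero_sub,
          neg_neg, zero_add]
        exact hgen a.2 ha2 l
  have hle : sInf {P : Submodule k (B × L) |
      (∀ x ∈ P, ∀ y : B × L, sbr y x ∈ P) ∧
      (∀ a ∈ {p : B × L | p.1 = 0 ∧ p.2 ∈ K},
        ∀ c ∈ {p : B × L | ∃ l : L, p = (-(d l), l)}, sbr a c ∈ P)} ≤ P₀ :=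
    sInf_le hP₀mem
  constructor
  · intro p hp
    exact ((hmemP₀ p).mp (hle hp)).1
  · apply le_antisymm
    · rintro x ⟨p, hp, rfl⟩
      exact ((hmemP₀ p).mp (hle hp)).2
    · rw [Submodule.span_le]
      rintro x ⟨kk, hk, l, rfl⟩
      refine ⟨sbr (0, kk) (-(d l), l), ?_, ?_⟩
      · exact Submodule.mem_sInf.mpr fun P hP =>
          hP.2 (0, kk) ⟨rfl, hk⟩ (-(d l), l) ⟨l, rfl⟩
      · rw [hsbr]
        simp
end

section
/- Two congruences R_M and R_N on a group X (corresponding to normal subgroups M and N) admit a connector — a function p : {(x,y,z) : x R_M y, y R_N z} → X that is a partial group homomorphism satisfying p(x,y,y) = x and p(y,y,z) = z — if and only if the group commutator [M, N] is trivial. -/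
/-- Two congruences `R_M`, `R_N` on a group `X` (corresponding to normal
subgroups `M`, `N`) admit a connector — a partial Mal'tsev operation on
triples `(x,y,z)` with `x R_M y`, `y R_N z`, compatible with multiplication
and satisfying the unit laws — if and only if `[M, N] = 1`. -/
theorem connector_exists_iff_commutator_trivial
    {X : Type*} [Group X]
    (M N : Subgroup X) (hM : M.Normal) (hN : N.Normal) :
    (∃ p : ∀ x y z : X, x * y⁻¹ ∈ M → y * z⁻¹ ∈ N → X,
      (∀ (x y : X) (h1 : x * y⁻¹ ∈ M) (h2 : y * y⁻¹ ∈ N),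
        p x y y h1 h2 = x) ∧
      (∀ (y z : X) (h1 : y * y⁻¹ ∈ M) (h2 : y * z⁻¹ ∈ N),
        p y y z h1 h2 = z) ∧
      (∀ (x y z x' y' z' : X)
        (h1 : x * y⁻¹ ∈ M) (h2 : y * z⁻¹ ∈ N)
        (h1' : x' * y'⁻¹ ∈ M) (h2' : y' * z'⁻¹ ∈ N)
        (h1'' : (x * x') * (y * y')⁻¹ ∈ M)
        (h2'' : (y * y') * (z * z')⁻¹ ∈ N),
        p (x * x') (y * y') (z * z') h1'' h2'' =
          p x y z h1 h2 * p x' y' z' h1' h2')) ↔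
      ⁅M, N⁆ = (⊥ : Subgroup X) := by
  constructor
  · rintro ⟨p, hI, hII, hmul⟩
    rw [eq_bot_iff, Subgroup.commutator_le]
    intro m hm n hn
    -- compute p m 1 n in two ways
    have hmM : m * (1 : X)⁻¹ ∈ M := by simpa using hm
    have h1M : (1 : X) * (1 : X)⁻¹ ∈ M := by simpa using M.one_mem
    have h1N : (1 : X) * (1 : X)⁻¹ ∈ N := by simpa using N.one_mem
    have hnN : (1 : X) * n⁻¹ ∈ N := by simpa using N.inv_mem hn
    have hnN' : n * (1 : X)⁻¹ ∈ N := by simpa using hn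
    have hmn : (m * 1) * ((1 : X) * 1)⁻¹ ∈ M := by simpa using hm
    have hmn2 : ((1 : X) * 1) * ((1 : X) * n)⁻¹ ∈ N := by
      simpa using N.inv_mem hn
    have e1 : p (m * 1) (1 * 1) (1 * n) hmn hmn2 = m * n := by
      rw [hmul m 1 1 1 1 n hmM h1N h1M hnN, hI m 1 hmM h1N, hII 1 n h1M hnN]
    have hmn' : ((1 : X) * m) * ((1 : X) * 1)⁻¹ ∈ M := by simpa using hm
    have hmn2' : ((1 : X) * 1) * (n * 1)⁻¹ ∈ N := by simpa using N.inv_mem hn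
    have e2 : p (1 * m) (1 * 1) (n * 1) hmn' hmn2' = n * m := by
      rw [hmul 1 1 n m 1 1 h1M hnN hmM h1N, hII 1 n h1M hnN, hI m 1 hmM h1N]
    have key : m * n = n * m := by
      rw [← e1, ← e2]
      congr 1 <;> simp
    have : (open scoped commutatorElement in ⁅m, n⁆) = 1 := commutatorElement_eq_one_iff_mul_comm.mpr key
    simp [this]
  · intro hcomm
    have comm : ∀ m ∈ M, ∀ n ∈ N, m * n = n * m := by
      intro m hm n hn
      have : (open scoped commutatorElement in ⁅m, n⁆) ∈ ⁅M, N⁆ := Subgroup.commutator_mem_commutator hm hn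
      rw [hcomm, Subgroup.mem_bot, commutatorElement_def] at this
      exact commutatorElement_eq_one_iff_mul_comm.mp this
    refine ⟨fun x y z _ _ => x * y⁻¹ * z, ?_, ?_, ?_⟩
    · intro x y h1 h2; group
    · intro y z h1 h2; group
    · intro x y z x' y' z' h1 h2 h1' h2' h1'' h2''
      have hN' : y⁻¹ * z ∈ N := by
        have := N.inv_mem (hN.conj_mem _ h2 y⁻¹)
        simpa [mul_assoc] using this
      have hc : (x' * y'⁻¹) * (y⁻¹ * z) = (y⁻¹ * z) * (x' * y'⁻¹) :=
        comm _ h1' _ hN'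
      calc x * x' * (y * y')⁻¹ * (z * z')
          = x * ((x' * y'⁻¹) * (y⁻¹ * z)) * z' := by group
        _ = x * ((y⁻¹ * z) * (x' * y'⁻¹)) * z' := by rw [hc]
        _ = x * y⁻¹ * z * (x' * y'⁻¹ * z') := by group
end
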